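/- Let n be odd, 1 ≤ i ≤ n−1 and (a,b) ∈ ℂ² with (a,b) ≠ (0,0). The swap automorphism τ fixes the ideal I_i(a,b) (i.e. τ(I_i(a,b)) = I_i(a,b)) if and only if I_i(a,b) = ⟨x^{(n+1)/2}, y^{(n+1)/2}, xy⟩; equivalently, if and only if either 2i = n−1 and a = 0, or 2i = n+1 and b = 0. Thus for odd n there is a unique τ-fixed point on the exceptional locus of ℤ_n-Hilb(ℂ²), namely I_{(n−1)/2}(0:1) = I_{(n+1)/2}(1:0). -/

import Mathlib

open MvPolynomial

/-- The algebra automorphism `τ : x ↦ y, y ↦ x` of `ℂ[x,y]`. -/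
noncomputable def tauA : MvPolynomial (Fin 2) ℂ →ₐ[ℂ] MvPolynomial (Fin 2) ℂ :=
  aeval ![X 1, X 0]

/-- The Ito–Nakamura ideal `I_i(a,b) = ⟨a·xⁱ − b·y^{n−i}, x^{i+1}, xy, y^{n+1−i}⟩`. -/
noncomputable def itoNak (n i : ℕ) (a b : ℂ) : Ideal (MvPolynomial (Fin 2) ℂ) :=
  Ideal.span
    {C a * X 0 ^ i - C b * X 1 ^ (n - i), X 0 ^ (i + 1), X 0 * X 1, X 1 ^ (n + 1 - i)}

lemma tauA_X0 : tauA (X 0) = X 1 := by simp [tauA]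
lemma tauA_X1 : tauA (X 1) = X 0 := by simp [tauA]

open Finsupp in
lemma coeff_single_mul_pow (p : MvPolynomial (Fin 2) ℂ) (u : Fin 2) (j k : ℕ) :
    coeff (single u k) (p * X u ^ j) = if j ≤ k then coeff (single u (k - j)) p else 0 := by
  rw [X_pow_eq_monomial, coeff_mul_monomial']
  simp only [Finsupp.single_le_iff, single_eq_same, mul_one, ← Finsupp.single_tsub]

open Finsupp in
lemma coeff_single_mul_CXpow (p : MvPolynomial (Fin 2) ℂ) (u : Fin 2) (c : ℂ) (j k : ℕ) :
    coeff (single u k) (p * (C c * X u ^ j)) =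
      if j ≤ k then coeff (single u (k - j)) p * c else 0 := by
  rw [C_mul_X_pow_eq_monomial, coeff_mul_monomial']
  simp only [Finsupp.single_le_iff, single_eq_same, ← Finsupp.single_tsub]

open Finsupp in
lemma coeff_single_mul_CXpow_ne (p : MvPolynomial (Fin 2) ℂ) {u v : Fin 2} (huv : v ≠ u)
    (c : ℂ) {j : ℕ} (hj : 1 ≤ j) (k : ℕ) :
    coeff (single u k) (p * (C c * X v ^ j)) = 0 := by
  rw [C_mul_X_pow_eq_monomial, coeff_mul_monomial', if_neg]
  intro h
  have := Finsupp.single_le_iff.mp h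
  rw [Finsupp.single_eq_of_ne' (Ne.symm huv)] at this
  omega

open Finsupp in
lemma coeff_single_mul_pow_ne (p : MvPolynomial (Fin 2) ℂ) {u v : Fin 2} (huv : v ≠ u)
    {j : ℕ} (hj : 1 ≤ j) (k : ℕ) :
    coeff (single u k) (p * X v ^ j) = 0 := by
  have := coeff_single_mul_CXpow_ne p huv 1 hj k
  rwa [C_1, one_mul] at this

open Finsupp in
lemma coeff_single_mul_XY (p : MvPolynomial (Fin 2) ℂ) (u : Fin 2) (k : ℕ) :
    coeff (single u k) (p * (X 0 * X 1)) = 0 := by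
  have hXY : (X 0 * X 1 : MvPolynomial (Fin 2) ℂ)
      = monomial (single 0 1 + single 1 1) 1 := by
    rw [X, X, monomial_mul, one_mul]
  rw [hXY, coeff_mul_monomial', if_neg]
  intro h
  fin_cases u
  · have := Finsupp.le_def.mp h 1
    simp [Finsupp.single_eq_of_ne, Finsupp.single_eq_same] at this
  · have := Finsupp.le_def.mp h 0
    simp [Finsupp.single_eq_of_ne, Finsupp.single_eq_same] at this

lemma itoNak_rep {n i : ℕ} {a b : ℂ} {f : MvPolynomial (Fin 2) ℂ} (hf : f ∈ itoNak n i a b) :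
    ∃ p q r s : MvPolynomial (Fin 2) ℂ,
      f = p * (C a * X 0 ^ i - C b * X 1 ^ (n - i)) + q * X 0 ^ (i + 1) +
          r * (X 0 * X 1) + s * X 1 ^ (n + 1 - i) := by
  rw [itoNak] at hf
  obtain ⟨p, z1, hz1, rfl⟩ := Ideal.mem_span_insert.mp hf
  obtain ⟨q, z2, hz2, rfl⟩ := Ideal.mem_span_insert.mp hz1
  obtain ⟨r, z3, hz3, rfl⟩ := Ideal.mem_span_insert.mp hz2
  obtain ⟨s, hs⟩ := Ideal.mem_span_singleton'.mp hz3
  exact ⟨p, q, r, s, by rw [← hs]; ring⟩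

open Finsupp in
lemma coeff_vanish {n i : ℕ} {a b : ℂ} (hi1 : 1 ≤ i) (hin : i + 1 ≤ n)
    {f : MvPolynomial (Fin 2) ℂ} (hf : f ∈ itoNak n i a b) :
    (∀ k < i, coeff (single 0 k) f = 0) ∧ (∀ k < n - i, coeff (single 1 k) f = 0) ∧
      b * coeff (single 0 i) f + a * coeff (single 1 (n - i)) f = 0 := by
  obtain ⟨p, q, r, s, rfl⟩ := itoNak_rep hf
  have h01 : (0 : Fin 2) ≠ 1 := by decide
  have h10 : (1 : Fin 2) ≠ 0 := by decide
  have hni : 1 ≤ n - i := by omega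
  have hni1 : 1 ≤ n + 1 - i := by omega
  refine ⟨?_, ?_, ?_⟩
  · intro k hk
    have c1 : ¬(i ≤ k) := by omega
    have c2 : ¬(i + 1 ≤ k) := by omega
    simp only [coeff_add, mul_sub, coeff_sub, coeff_single_mul_CXpow,
      coeff_single_mul_CXpow_ne p h10 b hni, coeff_single_mul_pow,
      coeff_single_mul_XY, coeff_single_mul_pow_ne s h10 hni1, c1, c2,
      if_false, ite_false]
    ring
  · intro k hk
    have c1 : ¬(n - i ≤ k) := by omega
    have c2 : ¬(n + 1 - i ≤ k) := by omega
    simp only [coeff_add, mul_sub, coeff_sub,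
      coeff_single_mul_CXpow_ne p h01 a hi1, coeff_single_mul_CXpow,
      coeff_single_mul_pow_ne q h01 (by omega : 1 ≤ i + 1),
      coeff_single_mul_XY, coeff_single_mul_pow, c1, c2, if_false, ite_false]
    ring
  · have c1 : ¬(i + 1 ≤ i) := by omega
    have c2 : ¬(n + 1 - i ≤ n - i) := by omega
    simp only [coeff_add, mul_sub, coeff_sub, coeff_single_mul_CXpow,
      coeff_single_mul_CXpow_ne p h10 b hni, coeff_single_mul_CXpow_ne p h01 a hi1,
      coeff_single_mul_pow, coeff_single_mul_XY,
      coeff_single_mul_pow_ne s h10 hni1, coeff_single_mul_pow_ne q h01 (by omega : 1 ≤ i + 1),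
      c1, c2, if_false, ite_false, le_refl, if_true, ite_true,
      Nat.sub_self, Finsupp.single_zero]
    ring

open Finsupp in
lemma xpow_mem {n i k : ℕ} {a b : ℂ} (hi1 : 1 ≤ i) (hin : i + 1 ≤ n)
    (h : (X 0 ^ k : MvPolynomial (Fin 2) ℂ) ∈ itoNak n i a b) (hk : k ≤ i) :
    k = i ∧ b = 0 := by
  obtain ⟨h1, h2, h3⟩ := coeff_vanish hi1 hin h
  have e1 : coeff (single (0 : Fin 2) k) (X (0 : Fin 2) ^ k : MvPolynomial (Fin 2) ℂ) = 1 := by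
    simp [X_pow_eq_monomial, coeff_monomial]
  rcases lt_or_eq_of_le hk with hlt | rfl
  · exact absurd ((h1 k hlt ▸ e1).symm) one_ne_zero
  · refine ⟨rfl, ?_⟩
    have e2 : coeff (single (1 : Fin 2) (n - k)) (X (0 : Fin 2) ^ k : MvPolynomial (Fin 2) ℂ)
        = 0 := by
      rw [X_pow_eq_monomial, coeff_monomial, if_neg]
      intro heq
      have := DFunLike.congr_fun heq 0
      simp [Finsupp.single_eq_of_ne] at this
      omega
    rw [e1, e2, mul_one, mul_zero, add_zero] at h3
    exact h3

open Finsupp in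
lemma ypow_mem {n i k : ℕ} {a b : ℂ} (hi1 : 1 ≤ i) (hin : i + 1 ≤ n)
    (h : (X 1 ^ k : MvPolynomial (Fin 2) ℂ) ∈ itoNak n i a b) (hk : k ≤ n - i) :
    k = n - i ∧ a = 0 := by
  obtain ⟨h1, h2, h3⟩ := coeff_vanish hi1 hin h
  have e1 : coeff (single (1 : Fin 2) k) (X (1 : Fin 2) ^ k : MvPolynomial (Fin 2) ℂ) = 1 := by
    simp [X_pow_eq_monomial, coeff_monomial]
  rcases lt_or_eq_of_le hk with hlt | rfl
  · exact absurd ((h2 k hlt ▸ e1).symm) one_ne_zero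
  · refine ⟨rfl, ?_⟩
    have e2 : coeff (single (0 : Fin 2) i) (X (1 : Fin 2) ^ (n - i) : MvPolynomial (Fin 2) ℂ)
        = 0 := by
      rw [X_pow_eq_monomial, coeff_monomial, if_neg]
      intro heq
      have := DFunLike.congr_fun heq 0
      simp [Finsupp.single_eq_of_ne] at this
      omega
    rw [e1, e2, mul_one, mul_zero, zero_add] at h3
    exact h3

lemma tau_forward {n i : ℕ} {a b : ℂ} (hodd : Odd n) (hi1 : 1 ≤ i) (hi2 : i ≤ n - 1)
    (hmap : Ideal.map tauA (itoNak n i a b) = itoNak n i a b) :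
    (2 * i = n - 1 ∧ a = 0) ∨ (2 * i = n + 1 ∧ b = 0) := by
  obtain ⟨c, hc⟩ := hodd
  have hin : i + 1 ≤ n := by omega
  have hg2 : (X 0 ^ (i + 1) : MvPolynomial (Fin 2) ℂ) ∈ itoNak n i a b := by
    rw [itoNak]; exact Ideal.subset_span (by simp)
  have hg4 : (X 1 ^ (n + 1 - i) : MvPolynomial (Fin 2) ℂ) ∈ itoNak n i a b := by
    rw [itoNak]; exact Ideal.subset_span (by simp)
  have hy : (X 1 ^ (i + 1) : MvPolynomial (Fin 2) ℂ) ∈ itoNak n i a b := by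
    have := Ideal.mem_map_of_mem tauA hg2
    rw [hmap] at this
    rwa [map_pow, tauA_X0] at this
  have hx : (X 0 ^ (n + 1 - i) : MvPolynomial (Fin 2) ℂ) ∈ itoNak n i a b := by
    have := Ideal.mem_map_of_mem tauA hg4
    rw [hmap] at this
    rwa [map_pow, tauA_X1] at this
  rcases le_or_gt (i + 1) (n - i) with h1 | h1
  · obtain ⟨he, ha⟩ := ypow_mem hi1 hin hy h1
    exact Or.inl ⟨by omega, ha⟩
  · obtain ⟨he, hb⟩ := xpow_mem hi1 hin hx (by omega)
    exact Or.inr ⟨by omega, hb⟩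

lemma spanA {i : ℕ} {b : ℂ} (hb : b ≠ 0) (j : ℕ) :
    Ideal.span {C 0 * X 0 ^ j - C b * X 1 ^ (i + 1), X 0 ^ (i + 1), X 0 * X 1,
        X 1 ^ (i + 2)}
      = Ideal.span {(X 0 ^ (i + 1) : MvPolynomial (Fin 2) ℂ), X 1 ^ (i + 1), X 0 * X 1} := by
  apply le_antisymm
  · rw [Ideal.span_le]
    rintro g hg
    simp only [Set.mem_insert_iff, Set.mem_singleton_iff] at hg
    have hx1 : (X 1 ^ (i + 1) : MvPolynomial (Fin 2) ℂ) ∈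
        Ideal.span {(X 0 ^ (i + 1) : MvPolynomial (Fin 2) ℂ), X 1 ^ (i + 1), X 0 * X 1} :=
      Ideal.subset_span (by simp)
    rcases hg with rfl | rfl | rfl | rfl
    · have he : (C 0 * X 0 ^ j - C b * X 1 ^ (i + 1) : MvPolynomial (Fin 2) ℂ)
          = -(C b) * X 1 ^ (i + 1) := by rw [C_0]; ring
      rw [he]; exact Ideal.mul_mem_left _ _ hx1
    · exact Ideal.subset_span (by simp)
    · exact Ideal.subset_span (by simp)
    · have he : (X 1 ^ (i + 2) : MvPolynomial (Fin 2) ℂ) = X 1 * X 1 ^ (i + 1) := by ring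
      rw [he]; exact Ideal.mul_mem_left _ _ hx1
  · rw [Ideal.span_le]
    rintro g hg
    simp only [Set.mem_insert_iff, Set.mem_singleton_iff] at hg
    have hg1 : (C 0 * X 0 ^ j - C b * X 1 ^ (i + 1) : MvPolynomial (Fin 2) ℂ) ∈
        Ideal.span {C 0 * X 0 ^ j - C b * X 1 ^ (i + 1), X 0 ^ (i + 1), X 0 * X 1,
          X 1 ^ (i + 2)} := Ideal.subset_span (by simp)
    rcases hg with rfl | rfl | rfl
    · exact Ideal.subset_span (by simp)
    · have he : (X 1 ^ (i + 1) : MvPolynomial (Fin 2) ℂ)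
          = C (-b⁻¹) * (C 0 * X 0 ^ j - C b * X 1 ^ (i + 1)) := by
        rw [C_0, zero_mul, zero_sub, map_neg, neg_mul_neg, ← mul_assoc, ← C_mul,
          inv_mul_cancel₀ hb, C_1, one_mul]
      have hm := Ideal.mul_mem_left _ (C (-b⁻¹)) hg1
      rwa [← he] at hm
    · exact Ideal.subset_span (by simp)

lemma spanB {i : ℕ} {a : ℂ} (ha : a ≠ 0) (j : ℕ) :
    Ideal.span {C a * X 0 ^ i - C 0 * X 1 ^ j, X 0 ^ (i + 1), X 0 * X 1, X 1 ^ i}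
      = Ideal.span {(X 0 ^ i : MvPolynomial (Fin 2) ℂ), X 1 ^ i, X 0 * X 1} := by
  apply le_antisymm
  · rw [Ideal.span_le]
    rintro g hg
    simp only [Set.mem_insert_iff, Set.mem_singleton_iff] at hg
    have hx0 : (X 0 ^ i : MvPolynomial (Fin 2) ℂ) ∈
        Ideal.span {(X 0 ^ i : MvPolynomial (Fin 2) ℂ), X 1 ^ i, X 0 * X 1} :=
      Ideal.subset_span (by simp)
    rcases hg with rfl | rfl | rfl | rfl
    · have he : (C a * X 0 ^ i - C 0 * X 1 ^ j : MvPolynomial (Fin 2) ℂ)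
          = C a * X 0 ^ i := by rw [C_0]; ring
      rw [he]; exact Ideal.mul_mem_left _ _ hx0
    · have he : (X 0 ^ (i + 1) : MvPolynomial (Fin 2) ℂ) = X 0 * X 0 ^ i := by ring
      rw [he]; exact Ideal.mul_mem_left _ _ hx0
    · exact Ideal.subset_span (by simp)
    · exact Ideal.subset_span (by simp)
  · rw [Ideal.span_le]
    rintro g hg
    simp only [Set.mem_insert_iff, Set.mem_singleton_iff] at hg
    have hg1 : (C a * X 0 ^ i - C 0 * X 1 ^ j : MvPolynomial (Fin 2) ℂ) ∈
        Ideal.span {C a * X 0 ^ i - C 0 * X 1 ^ j, X 0 ^ (i + 1), X 0 * X 1, X 1 ^ i} :=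
      Ideal.subset_span (by simp)
    rcases hg with rfl | rfl | rfl
    · have he : (X 0 ^ i : MvPolynomial (Fin 2) ℂ)
          = C a⁻¹ * (C a * X 0 ^ i - C 0 * X 1 ^ j) := by
        rw [C_0, zero_mul, sub_zero, ← mul_assoc, ← C_mul, inv_mul_cancel₀ ha, C_1, one_mul]
      have hm := Ideal.mul_mem_left _ (C a⁻¹) hg1
      rwa [← he] at hm
    · exact Ideal.subset_span (by simp)
    · exact Ideal.subset_span (by simp)

lemma map_tauA_span (m : ℕ) :
    Ideal.map tauA (Ideal.span {(X 0 ^ m : MvPolynomial (Fin 2) ℂ), X 1 ^ m, X 0 * X 1})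
      = Ideal.span {(X 0 ^ m : MvPolynomial (Fin 2) ℂ), X 1 ^ m, X 0 * X 1} := by
  rw [Ideal.map_span]
  congr 1
  rw [Set.image_insert_eq, Set.image_insert_eq, Set.image_singleton]
  simp only [map_pow, map_mul, tauA_X0, tauA_X1]
  rw [mul_comm (X (1 : Fin 2) : MvPolynomial (Fin 2) ℂ) (X 0)]
  exact Set.insert_comm _ _ _


/-- for odd `n`, `τ` fixes `I_i(a,b)` iff
`I_i(a,b) = ⟨x^{(n+1)/2}, y^{(n+1)/2}, xy⟩`, iff `(2i = n−1 ∧ a = 0) ∨ (2i = n+1 ∧ b = 0)`. -/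
theorem tau_fixed_points_odd (n : ℕ) (hodd : Odd n) :
    ∀ i : ℕ, 1 ≤ i → i ≤ n - 1 → ∀ a b : ℂ, ¬(a = 0 ∧ b = 0) →
      (Ideal.map tauA (itoNak n i a b) = itoNak n i a b ↔
        itoNak n i a b =
          Ideal.span
            {(X 0 ^ ((n + 1) / 2) : MvPolynomial (Fin 2) ℂ), X 1 ^ ((n + 1) / 2),
              X 0 * X 1}) ∧
      (Ideal.map tauA (itoNak n i a b) = itoNak n i a b ↔
        (2 * i = n - 1 ∧ a = 0) ∨ (2 * i = n + 1 ∧ b = 0)) := by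
  intro i hi1 hi2 a b hab
  obtain ⟨c, hc⟩ := hodd
  have hodd' : Odd n := ⟨c, hc⟩
  have hPJ : ((2 * i = n - 1 ∧ a = 0) ∨ (2 * i = n + 1 ∧ b = 0)) →
      itoNak n i a b = Ideal.span
        {(X 0 ^ ((n + 1) / 2) : MvPolynomial (Fin 2) ℂ), X 1 ^ ((n + 1) / 2), X 0 * X 1} := by
    rintro (⟨h2i, rfl⟩ | ⟨h2i, rfl⟩)
    · have hb : b ≠ 0 := fun h => hab ⟨rfl, h⟩
      have e1 : n - i = i + 1 := by omega
      have e2 : n + 1 - i = i + 2 := by omega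
      have e3 : (n + 1) / 2 = i + 1 := by omega
      rw [itoNak, e1, e2, e3]
      exact spanA hb i
    · have ha : a ≠ 0 := fun h => hab ⟨h, rfl⟩
      have e2 : n + 1 - i = i := by omega
      have e3 : (n + 1) / 2 = i := by omega
      rw [itoNak, e2, e3]
      exact spanB ha (n - i)
  have hJ := map_tauA_span ((n + 1) / 2)
  refine ⟨⟨fun h => hPJ (tau_forward hodd' hi1 hi2 h), fun h => by rw [h]; exact hJ⟩,
      ⟨tau_forward hodd' hi1 hi2, fun hp => by rw [hPJ hp]; exact hJ⟩⟩
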